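/- Let n, k be positive integers, and for each i in [n] let F_i ⊆ [n]^k (a k-partite k-graph on k disjoint copies of [n]). If |F_i| > (n-1)n^{k-1} for all i in [n], then {F_1, ..., F_n} admits a rainbow matching (which is a perfect matching of the kn vertices). -/

import Mathlib

lemma card_perm_fix_succ (n : ℕ) (i b : Fin (n+1)) :
    Fintype.card {σ : Equiv.Perm (Fin (n+1)) // σ i = b} = n.factorial := by
  have e1 : {σ : Equiv.Perm (Fin (n+1)) // σ i = b} ≃
      {σ : Equiv.Perm (Fin (n+1)) // σ 0 = b} :=
    { toFun := fun σ => ⟨σ.1 * Equiv.swap 0 i, by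
        simpa [Equiv.Perm.mul_apply] using σ.2⟩
      invFun := fun σ => ⟨σ.1 * Equiv.swap 0 i, by
        simpa [Equiv.Perm.mul_apply, Equiv.swap_apply_right] using σ.2⟩
      left_inv := fun σ => by
        ext x; simp [mul_assoc, Equiv.swap_mul_self]
      right_inv := fun σ => by
        ext x; simp [mul_assoc, Equiv.swap_mul_self] }
  have e2 : {σ : Equiv.Perm (Fin (n+1)) // σ 0 = b} ≃ Equiv.Perm (Fin n) :=
    { toFun := fun σ => (Equiv.Perm.decomposeFin σ.1).2
      invFun := fun π => ⟨Equiv.Perm.decomposeFin.symm (b, π), by simp⟩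
      left_inv := fun σ => by
        have h1 : (Equiv.Perm.decomposeFin σ.1).1 = b := by
          have := Equiv.Perm.decomposeFin_symm_apply_zero
            (Equiv.Perm.decomposeFin σ.1).1 (Equiv.Perm.decomposeFin σ.1).2
          rw [← Prod.mk.eta (p := Equiv.Perm.decomposeFin σ.1), Equiv.symm_apply_apply] at this
          rw [← this, σ.2]
        apply Subtype.ext
        have hp : ((b, (Equiv.Perm.decomposeFin σ.1).2) :
            Fin (n+1) × Equiv.Perm (Fin n)) = Equiv.Perm.decomposeFin σ.1 := by
          rw [← Prod.mk.eta (p := Equiv.Perm.decomposeFin σ.1), h1]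
        show Equiv.Perm.decomposeFin.symm (b, (Equiv.Perm.decomposeFin σ.1).2) = σ.1
        rw [hp, Equiv.symm_apply_apply]
      right_inv := fun π => by simp }
  rw [Fintype.card_congr (e1.trans e2), Fintype.card_perm, Fintype.card_fin]

lemma card_perm_fix (n : ℕ) (hn : 0 < n) (i b : Fin n) :
    Fintype.card {σ : Equiv.Perm (Fin n) // σ i = b} = (n-1).factorial := by
  obtain ⟨m, rfl⟩ : ∃ m, n = m + 1 := ⟨n - 1, by omega⟩
  simpa using card_perm_fix_succ m i b

theorem rainbow_perfect_matching
    (n k : ℕ) (hn : 0 < n) (hk : 0 < k)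
    (F : Fin n → Finset (Fin k → Fin n))
    (hFcard : ∀ i, (F i).card > (n - 1) * n ^ (k - 1)) :
    ∃ e : Fin n → (Fin k → Fin n), (∀ i, e i ∈ F i) ∧
      ∀ i j, i ≠ j → ∀ p : Fin k, e i p ≠ e j p := by
  by_contra hcon
  push_neg at hcon
  -- For every tuple of permutations, some edge is missing
  have key : ∀ σ : Fin k → Equiv.Perm (Fin n), ∃ i, (fun p => σ p i) ∉ F i := by
    intro σ
    by_contra hall
    push_neg at hall
    obtain ⟨i, j, hij, p, hp⟩ := hcon (fun i p => σ p i) hall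
    exact hij ((σ p).injective hp)
  classical
  set c : ℕ := ((n-1).factorial) ^ k with hc
  set N : ℕ := n ^ (k - 1) with hN
  have hnk : n ^ k = n * N := by
    rw [hN, ← pow_succ']
    congr 1
    omega
  -- fiber counting
  have fiber : ∀ (i : Fin n) (a : Fin k → Fin n),
      (Finset.univ.filter
        (fun σ : Fin k → Equiv.Perm (Fin n) => (fun p => σ p i) = a)).card = c := by
    intro i a
    rw [← Fintype.card_subtype]
    have e : {σ : Fin k → Equiv.Perm (Fin n) // (fun p => σ p i) = a} ≃
        ∀ p : Fin k, {τ : Equiv.Perm (Fin n) // τ i = a p} := by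
      refine (Equiv.subtypeEquivRight ?_).trans (Equiv.subtypePiEquivPi)
      intro σ
      constructor
      · intro h p; exact congrFun h p
      · intro h; funext p; exact h p
    rw [Fintype.card_congr e, Fintype.card_pi]
    simp [card_perm_fix n hn i, hc]
  set bad : Fin n → Finset (Fin k → Equiv.Perm (Fin n)) :=
    fun i => Finset.univ.filter (fun σ => (fun p => σ p i) ∉ F i) with hbad
  have step1 : (Finset.univ : Finset (Fin k → Equiv.Perm (Fin n))).card ≤
      ∑ i : Fin n, (bad i).card := by
    calc (Finset.univ : Finset (Fin k → Equiv.Perm (Fin n))).card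
        ≤ (Finset.univ.biUnion bad).card := by
          apply Finset.card_le_card
          intro σ _
          obtain ⟨i, hi⟩ := key σ
          exact Finset.mem_biUnion.2 ⟨i, Finset.mem_univ i, by simp [hbad, hi]⟩
      _ ≤ ∑ i : Fin n, (bad i).card := Finset.card_biUnion_le
  have hcompl : ∀ i, (Finset.univ \ F i).card ≤ N - 1 := by
    intro i
    have h1 : (Finset.univ \ F i).card = n ^ k - (F i).card := by
      rw [Finset.card_sdiff_of_subset (Finset.subset_univ _), Finset.card_univ]
      simp
    have h2 := hFcard i
    have h3 : (n - 1) * N + N = n * N := by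
      have : (n - 1) + 1 = n := by omega
      calc (n - 1) * N + N = ((n - 1) + 1) * N := by ring
        _ = n * N := by rw [this]
    have h4 : (F i).card ≤ n ^ k := by
      calc (F i).card ≤ (Finset.univ : Finset (Fin k → Fin n)).card :=
            Finset.card_le_card (Finset.subset_univ _)
        _ = n ^ k := by rw [Finset.card_univ]; simp
    rw [h1, hnk]
    omega
  have step2 : ∀ i, (bad i).card ≤ (N - 1) * c := by
    intro i
    have hfib : (bad i).card = ∑ a ∈ Finset.univ \ F i,
        ((bad i).filter (fun σ => (fun p => σ p i) = a)).card := by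
      apply Finset.card_eq_sum_card_fiberwise
      intro σ hσ
      simp only [hbad, Finset.mem_coe, Finset.mem_filter] at hσ
      simp [hσ.2]
    rw [hfib]
    have heach : ∀ a ∈ Finset.univ \ F i,
        ((bad i).filter (fun σ => (fun p => σ p i) = a)).card = c := by
      intro a ha
      rw [Finset.mem_sdiff] at ha
      rw [← fiber i a]
      congr 1
      ext σ
      simp only [hbad, Finset.mem_filter, Finset.mem_univ, true_and]
      constructor
      · rintro ⟨-, h⟩; exact h
      · rintro h; exact ⟨by rw [h]; exact ha.2, h⟩
    rw [Finset.sum_congr rfl heach, Finset.sum_const, smul_eq_mul]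
    exact Nat.mul_le_mul_right c (hcompl i)
  have total : (Finset.univ : Finset (Fin k → Equiv.Perm (Fin n))).card = n ^ k * c := by
    rw [Finset.card_univ, Fintype.card_pi]
    have : ∀ p : Fin k, Fintype.card (Equiv.Perm (Fin n)) = n * (n-1).factorial := by
      intro p
      rw [Fintype.card_perm, Fintype.card_fin]
      obtain ⟨m, rfl⟩ : ∃ m, n = m + 1 := ⟨n - 1, by omega⟩
      simp [Nat.factorial_succ]
    rw [Finset.prod_congr rfl (fun p _ => this p), Finset.prod_const, Finset.card_univ,
      Fintype.card_fin, Nat.mul_pow]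
  have hfinal : n ^ k * c ≤ n * ((N - 1) * c) := by
    rw [← total]
    calc (Finset.univ : Finset (Fin k → Equiv.Perm (Fin n))).card
        ≤ ∑ i : Fin n, (bad i).card := step1
      _ ≤ ∑ _i : Fin n, (N - 1) * c := Finset.sum_le_sum (fun i _ => step2 i)
      _ = n * ((N - 1) * c) := by rw [Finset.sum_const, smul_eq_mul, Finset.card_univ,
          Fintype.card_fin]
  have hcpos : 0 < c := Nat.pow_pos (Nat.factorial_pos _)
  have hNpos : 0 < N := Nat.pow_pos hn
  rw [hnk] at hfinal
  have : n * N * c = n * (N * c) := by ring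
  rw [this] at hfinal
  have h5 : (N - 1) * c + c = N * c := by
    have : (N - 1) + 1 = N := by omega
    calc (N - 1) * c + c = ((N - 1) + 1) * c := by ring
      _ = N * c := by rw [this]
  have := Nat.mul_le_mul_left n (le_refl ((N - 1) * c))
  nlinarith [Nat.mul_le_mul_left n (Nat.le_of_eq h5.symm), hn, hcpos]
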